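/- Let G be a finite simple graph and let w : E(G) → ℕ be a weight function such that every triangle t of G satisfies Σ_{e ∈ E(t)} w(e) ≥ 3. Then there exists a set F of edges of G meeting every triangle of G with 2·|F| ≤ Σ_{e ∈ E(G)} w(e). (Equivalently, τ(G) ≤ (3/2)·τ*_3(G) for every graph G.) -/

import Mathlib

open Finset

/-- The edge set of a triangle `t` (a set of vertices): all unordered pairs of
distinct vertices of `t`. -/
def triEdges {V : Type*} [DecidableEq V] (t : Finset V) : Finset (Sym2 V) :=
  t.sym2.filter (fun e => ¬ e.IsDiag)

/-- `P` is a collection of pairwise edge-disjoint triangles of `G`. -/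
def IsTrianglePacking {V : Type*} [DecidableEq V] (G : SimpleGraph V)
    (P : Finset (Finset V)) : Prop :=
  (∀ t ∈ P, G.IsNClique 3 t) ∧
    ∀ t₁ ∈ P, ∀ t₂ ∈ P, t₁ ≠ t₂ → Disjoint (triEdges t₁) (triEdges t₂)

/-- The triangle packing number `ν(G)`: the maximum number of pairwise
edge-disjoint triangles in `G`. -/
noncomputable def packingNumber {V : Type*} [DecidableEq V] (G : SimpleGraph V) : ℕ :=
  sSup {n | ∃ P : Finset (Finset V), IsTrianglePacking G P ∧ P.card = n}

section Aux
variable {V : Type*} [Fintype V] [DecidableEq V]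
set_option linter.unusedSectionVars false

variable {V : Type*} [Fintype V] [DecidableEq V]

def noncross (S : Finset V) (e : Sym2 V) : Prop :=
  (∀ x ∈ e, x ∈ S) ∨ (∀ x ∈ e, x ∉ S)

instance (S : Finset V) (e : Sym2 V) : Decidable (noncross S e) := by
  unfold noncross; infer_instance

lemma maxcut (s : Finset V) (B : Finset (Sym2 V))
    (hB : ∀ e ∈ B, ¬ e.IsDiag ∧ ∀ x ∈ e, x ∈ s) :
    ∃ S : Finset V, S ⊆ s ∧ 2 * (B.filter (noncross S)).card ≤ B.card := by
  induction s using Finset.induction_on generalizing B with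
  | empty =>
    refine ⟨∅, Finset.Subset.rfl, ?_⟩
    have hBe : B = ∅ := by
      rw [Finset.eq_empty_iff_forall_notMem]
      intro e he
      obtain ⟨hd, hm⟩ := hB e he
      induction e using Sym2.ind with
      | _ a b => exact absurd (hm a (by simp)) (by simp)
    simp [hBe]
  | @insert v s hv ih =>
    set B' := B.filter (fun e => v ∉ e) with hB'
    set Bv := B.filter (fun e => v ∈ e) with hBv
    obtain ⟨S', hS's, hS'⟩ := ih B' (by
      intro e he
      simp only [hB', Finset.mem_filter] at he
      obtain ⟨hd, hm⟩ := hB e he.1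
      refine ⟨hd, fun x hx => ?_⟩
      have := hm x hx
      rcases Finset.mem_insert.mp this with h | h
      · exact absurd (h ▸ hx) he.2
      · exact h)
    have hvS' : v ∉ S' := fun h => hv (hS's h)
    set Bv1 := Bv.filter (fun e => ∀ x ∈ e, x = v ∨ x ∈ S') with hBv1
    set Bv0 := Bv.filter (fun e => ∀ x ∈ e, x = v ∨ x ∉ S') with hBv0
    have hdisj : Disjoint Bv1 Bv0 := by
      rw [Finset.disjoint_left]
      intro e he1 he0
      simp only [hBv1, hBv0, hBv, Finset.mem_filter] at he1 he0
      obtain ⟨⟨heB, hve⟩, h1⟩ := he1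
      obtain ⟨-, h0⟩ := he0
      obtain ⟨hd, -⟩ := hB e heB
      induction e using Sym2.ind with
      | _ a b =>
        rw [Sym2.mk_isDiag_iff] at hd
        rw [Sym2.mem_iff] at hve
        have ha := h1 a (by simp); have hb := h1 b (by simp)
        have ha0 := h0 a (by simp); have hb0 := h0 b (by simp)
        rcases hve with rfl | rfl
        · rcases ha with h | h <;> rcases hb with h' | h' <;>
          rcases hb0 with h'' | h'' <;> tauto
        · rcases ha with h | h <;> rcases ha0 with h' | h' <;> tauto
    have hsum01 : Bv1.card + Bv0.card ≤ Bv.card := by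
      rw [← Finset.card_union_of_disjoint hdisj]
      exact Finset.card_le_card (Finset.union_subset (Finset.filter_subset _ _)
        (Finset.filter_subset _ _))
    have hsplit : B'.card + Bv.card = B.card := by
      rw [hB', hBv]
      have := Finset.card_filter_add_card_filter_not (s := B) (p := fun e => v ∈ e)
      simpa [Nat.add_comm] using this
    -- choose the side with fewer noncrossing v-edges
    rcases le_total Bv1.card Bv0.card with hle | hle
    · refine ⟨insert v S', Finset.insert_subset_insert v hS's, ?_⟩
      have hsub : B.filter (noncross (insert v S')) ⊆ B'.filter (noncross S') ∪ Bv1 := by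
        intro e he
        simp only [Finset.mem_filter] at he
        obtain ⟨heB, hnc⟩ := he
        by_cases hve : v ∈ e
        · refine Finset.mem_union_right _ ?_
          simp only [hBv1, hBv, Finset.mem_filter]
          refine ⟨⟨heB, hve⟩, fun x hx => ?_⟩
          rcases hnc with h | h
          · rcases Finset.mem_insert.mp (h x hx) with h' | h'
            · exact Or.inl h'
            · exact Or.inr h'
          · exact absurd (Finset.mem_insert_self v S') (h v hve)
        · refine Finset.mem_union_left _ ?_
          simp only [hB', Finset.mem_filter]
          refine ⟨⟨heB, hve⟩, ?_⟩
          rcases hnc with h | h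
          · refine Or.inl fun x hx => ?_
            rcases Finset.mem_insert.mp (h x hx) with h' | h'
            · exact absurd (h' ▸ hx) hve
            · exact h'
          · exact Or.inr fun x hx h' => h x hx (Finset.mem_insert_of_mem h')
      calc 2 * (B.filter (noncross (insert v S'))).card
          ≤ 2 * ((B'.filter (noncross S')).card + Bv1.card) := by
            have := Finset.card_le_card hsub
            have := le_trans this (Finset.card_union_le _ _)
            omega
        _ ≤ B'.card + Bv.card := by omega
        _ = B.card := hsplit
    · refine ⟨S', fun x hx => Finset.mem_insert_of_mem (hS's hx), ?_⟩
      have hsub : B.filter (noncross S') ⊆ B'.filter (noncross S') ∪ Bv0 := by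
        intro e he
        simp only [Finset.mem_filter] at he
        obtain ⟨heB, hnc⟩ := he
        by_cases hve : v ∈ e
        · refine Finset.mem_union_right _ ?_
          simp only [hBv0, hBv, Finset.mem_filter]
          refine ⟨⟨heB, hve⟩, fun x hx => ?_⟩
          rcases hnc with h | h
          · exact absurd (h v hve) hvS'
          · exact Or.inr (h x hx)
        · exact Finset.mem_union_left _ (by
            simp only [hB', Finset.mem_filter]; exact ⟨⟨heB, hve⟩, hnc⟩)
      calc 2 * (B.filter (noncross S')).card
          ≤ 2 * ((B'.filter (noncross S')).card + Bv0.card) := by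
            have := Finset.card_le_card hsub
            have := le_trans this (Finset.card_union_le _ _)
            omega
        _ ≤ B'.card + Bv.card := by omega
        _ = B.card := hsplit

lemma triEdges_three {a b c : V} (hab : a ≠ b) (hac : a ≠ c) (hbc : b ≠ c) :
    triEdges ({a, b, c} : Finset V) = {s(a, b), s(a, c), s(b, c)} := by
  ext e
  induction e using Sym2.ind with
  | _ x y =>
    simp only [triEdges, Finset.mem_filter, Finset.mk_mem_sym2_iff, Sym2.mk_isDiag_iff,
      Finset.mem_insert, Finset.mem_singleton, Sym2.eq_iff]
    constructor
    · rintro ⟨⟨hx, hy⟩, hxy⟩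
      rcases hx with rfl | rfl | rfl <;> rcases hy with rfl | rfl | rfl <;> tauto
    · rintro (⟨rfl, rfl⟩ | ⟨rfl, rfl⟩ | ⟨rfl, rfl⟩ | ⟨rfl, rfl⟩ | ⟨rfl, rfl⟩ | ⟨rfl, rfl⟩) <;>
        simp_all <;> tauto

end Aux

/-- `τ(G) ≤ (3/2)·τ*₃(G)`: from any 3-multi-transversal `w` one can extract an
integral triangle transversal `F` with `2·|F| ≤ Σ w`. -/
theorem transversal_from_order_three {V : Type*} [Fintype V] [DecidableEq V]
    (G : SimpleGraph V) [DecidableRel G.Adj] (w : Sym2 V → ℕ)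
    (hw : ∀ t : Finset V, G.IsNClique 3 t → 3 ≤ ∑ e ∈ triEdges t, w e) :
    ∃ F : Finset (Sym2 V),
      F ⊆ G.edgeFinset ∧
      (∀ t : Finset V, G.IsNClique 3 t → (triEdges t ∩ F).Nonempty) ∧
      2 * F.card ≤ ∑ e ∈ G.edgeFinset, w e := by
  classical
  set F2 := G.edgeFinset.filter (fun e => 2 ≤ w e) with hF2
  set B1 := G.edgeFinset.filter (fun e => w e = 1) with hB1
  obtain ⟨S, -, hS⟩ := maxcut Finset.univ B1 (by
    intro e he
    refine ⟨G.not_isDiag_of_mem_edgeSet ?_, fun x _ => Finset.mem_univ x⟩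
    rw [← SimpleGraph.mem_edgeFinset]
    exact Finset.mem_of_mem_filter e he)
  refine ⟨F2 ∪ B1.filter (noncross S), ?_, ?_, ?_⟩
  · exact Finset.union_subset (Finset.filter_subset _ _)
      ((Finset.filter_subset _ _).trans (Finset.filter_subset _ _))
  · intro t ht
    obtain ⟨a, b, c, hab, hac, hbc, rfl⟩ := Finset.card_eq_three.mp ht.2
    have hadj : ∀ x ∈ ({a,b,c} : Finset V), ∀ y ∈ ({a,b,c} : Finset V), x ≠ y → G.Adj x y := by
      intro x hx y hy hxy
      exact ht.1 (by exact_mod_cast hx) (by exact_mod_cast hy) hxy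
    have hmem : ∀ x ∈ ({a,b,c} : Finset V), ∀ y ∈ ({a,b,c} : Finset V), x ≠ y →
        s(x, y) ∈ G.edgeFinset := by
      intro x hx y hy hxy
      rw [SimpleGraph.mem_edgeFinset]
      exact hadj x hx y hy hxy
    have htri := triEdges_three hab hac hbc
    have hsum := hw _ ht
    rw [htri] at hsum
    have h1 : s(a,b) ∉ ({s(a,c), s(b,c)} : Finset (Sym2 V)) := by
      simp [Sym2.eq_iff]; tauto
    have h2 : s(a,c) ∉ ({s(b,c)} : Finset (Sym2 V)) := by
      simp [Sym2.eq_iff]; tauto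
    rw [Finset.sum_insert h1, Finset.sum_insert h2, Finset.sum_singleton] at hsum
    have ha' : a ∈ ({a,b,c} : Finset V) := by simp
    have hb' : b ∈ ({a,b,c} : Finset V) := by simp
    have hc' : c ∈ ({a,b,c} : Finset V) := by simp
    have eab := hmem a ha' b hb' hab
    have eac := hmem a ha' c hc' hac
    have ebc := hmem b hb' c hc' hbc
    by_cases k1 : 2 ≤ w s(a,b)
    · exact ⟨s(a,b), Finset.mem_inter.mpr ⟨htri ▸ (by simp),
        Finset.mem_union_left _ (Finset.mem_filter.mpr ⟨eab, k1⟩)⟩⟩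
    by_cases k2 : 2 ≤ w s(a,c)
    · exact ⟨s(a,c), Finset.mem_inter.mpr ⟨htri ▸ (by simp),
        Finset.mem_union_left _ (Finset.mem_filter.mpr ⟨eac, k2⟩)⟩⟩
    by_cases k3 : 2 ≤ w s(b,c)
    · exact ⟨s(b,c), Finset.mem_inter.mpr ⟨htri ▸ (by simp),
        Finset.mem_union_left _ (Finset.mem_filter.mpr ⟨ebc, k3⟩)⟩⟩
    have w1 : w s(a,b) = 1 ∧ w s(a,c) = 1 ∧ w s(b,c) = 1 := by omega
    have inB : ∀ x ∈ ({a,b,c} : Finset V), ∀ y ∈ ({a,b,c} : Finset V), x ≠ y →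
        w s(x,y) = 1 → s(x,y) ∈ B1 :=
      fun x hx y hy hxy h => Finset.mem_filter.mpr ⟨hmem x hx y hy hxy, h⟩
    -- pigeonhole: two of a, b, c on the same side of S
    have key : ∀ x y : V, x ∈ S → y ∈ S → noncross S s(x,y) := by
      intro x y hx hy
      exact Or.inl (fun z hz => by rcases Sym2.mem_iff.mp hz with rfl | rfl <;> assumption)
    have key' : ∀ x y : V, x ∉ S → y ∉ S → noncross S s(x,y) := by
      intro x y hx hy
      exact Or.inr (fun z hz => by rcases Sym2.mem_iff.mp hz with rfl | rfl <;> assumption)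
    by_cases hc1 : a ∈ S <;> by_cases hc2 : b ∈ S <;> by_cases hc3 : c ∈ S
    · exact ⟨s(a,b), Finset.mem_inter.mpr ⟨htri ▸ (by simp), Finset.mem_union_right _
        (Finset.mem_filter.mpr ⟨inB a ha' b hb' hab w1.1, key a b hc1 hc2⟩)⟩⟩
    · exact ⟨s(a,b), Finset.mem_inter.mpr ⟨htri ▸ (by simp), Finset.mem_union_right _
        (Finset.mem_filter.mpr ⟨inB a ha' b hb' hab w1.1, key a b hc1 hc2⟩)⟩⟩
    · exact ⟨s(a,c), Finset.mem_inter.mpr ⟨htri ▸ (by simp), Finset.mem_union_right _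
        (Finset.mem_filter.mpr ⟨inB a ha' c hc' hac w1.2.1, key a c hc1 hc3⟩)⟩⟩
    · exact ⟨s(b,c), Finset.mem_inter.mpr ⟨htri ▸ (by simp), Finset.mem_union_right _
        (Finset.mem_filter.mpr ⟨inB b hb' c hc' hbc w1.2.2, key' b c hc2 hc3⟩)⟩⟩
    · exact ⟨s(b,c), Finset.mem_inter.mpr ⟨htri ▸ (by simp), Finset.mem_union_right _
        (Finset.mem_filter.mpr ⟨inB b hb' c hc' hbc w1.2.2, key b c hc2 hc3⟩)⟩⟩
    · exact ⟨s(a,c), Finset.mem_inter.mpr ⟨htri ▸ (by simp), Finset.mem_union_right _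
        (Finset.mem_filter.mpr ⟨inB a ha' c hc' hac w1.2.1, key' a c hc1 hc3⟩)⟩⟩
    · exact ⟨s(a,b), Finset.mem_inter.mpr ⟨htri ▸ (by simp), Finset.mem_union_right _
        (Finset.mem_filter.mpr ⟨inB a ha' b hb' hab w1.1, key' a b hc1 hc2⟩)⟩⟩
    · exact ⟨s(a,b), Finset.mem_inter.mpr ⟨htri ▸ (by simp), Finset.mem_union_right _
        (Finset.mem_filter.mpr ⟨inB a ha' b hb' hab w1.1, key' a b hc1 hc2⟩)⟩⟩
  · -- counting
    have hdisj : Disjoint F2 B1 := by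
      rw [Finset.disjoint_left]
      intro e he1 he2
      have := (Finset.mem_filter.mp he1).2
      have := (Finset.mem_filter.mp he2).2
      omega
    have hsub : F2 ∪ B1 ⊆ G.edgeFinset :=
      Finset.union_subset (Finset.filter_subset _ _) (Finset.filter_subset _ _)
    have h2F2 : 2 * F2.card ≤ ∑ e ∈ F2, w e := by
      have := Finset.card_nsmul_le_sum F2 w 2 (fun x hx => (Finset.mem_filter.mp hx).2)
      simpa [Nat.mul_comm, Nat.smul_one_eq_cast] using this
    have hB1card : ∑ e ∈ B1, w e = B1.card := by
      rw [Finset.sum_congr rfl (fun x hx => (Finset.mem_filter.mp hx).2)]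
      simp [hB1]
    calc 2 * (F2 ∪ B1.filter (noncross S)).card
        ≤ 2 * (F2.card + (B1.filter (noncross S)).card) := by
          have := Finset.card_union_le F2 (B1.filter (noncross S))
          omega
      _ ≤ ∑ e ∈ F2, w e + B1.card := by omega
      _ = ∑ e ∈ F2, w e + ∑ e ∈ B1, w e := by rw [hB1card]
      _ = ∑ e ∈ F2 ∪ B1, w e := (Finset.sum_union hdisj).symm
      _ ≤ ∑ e ∈ G.edgeFinset, w e := Finset.sum_le_sum_of_subset hsub
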